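/- Suppose m satisfies the first-order condition (S/σ)·φ((θ−m)/σ) = C·m and the strict second-order condition m·(m−θ) + σ² > 0. Then m > 0, and any differentiable local solution branch m(θ) of the first-order condition satisfies dm/dθ = m(m−θ) / (m(m−θ) + σ²). In particular: if m > θ then 0 < dm/dθ < 1, and if m ≤ θ then dm/dθ ≤ 0. -/

import Mathlib

open MeasureTheory Filter Set

/-- Standard normal probability density function. -/
noncomputable def stdphi (z : ℝ) : ℝ := (Real.sqrt (2 * Real.pi))⁻¹ * Real.exp (-z ^ 2 / 2)

/-- Standard normal cumulative distribution function. -/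
noncomputable def stdPhi (x : ℝ) : ℝ := ∫ t in Set.Iic x, stdphi t

lemma stdphi_pos (z : ℝ) : 0 < stdphi z := by
  unfold stdphi
  positivity

lemma hasDerivAt_stdphi (z : ℝ) : HasDerivAt stdphi (-z * stdphi z) z := by
  have h1 : HasDerivAt (fun z : ℝ => -z ^ 2 / 2) (-z) z := by
    have := ((hasDerivAt_pow 2 z).neg).div_const 2
    exact this.congr_deriv (by norm_num; ring)
  have h2 := h1.exp.const_mul ((Real.sqrt (2 * Real.pi))⁻¹)
  exact (h2.congr_deriv (by unfold stdphi; ring)).congr_of_eventuallyEq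
    (Filter.Eventually.of_forall fun y => by unfold stdphi; rfl)

/-- If `m` satisfies the first-order condition `(S/σ)·φ((θ−m)/σ) = C·m` and the strict
second-order condition `m(m−θ) + σ² > 0`, then `m > 0`, and any differentiable local
solution branch of the FOC through `(θ, m)` has derivative `m(m−θ)/(m(m−θ)+σ²)`;
in particular it lies in `(0,1)` when `m > θ` and is `≤ 0` when `m ≤ θ`. -/
theorem stmt6 (S C σ : ℝ) (hS : 0 < S) (hC : 0 < C) (hσ : 0 < σ)
    (θ m : ℝ)
    (hFOC : S / σ * stdphi ((θ - m) / σ) = C * m)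
    (hSOC : m * (m - θ) + σ ^ 2 > 0) :
    0 < m ∧
    ∀ (mf : ℝ → ℝ) (d : ℝ), mf θ = m → HasDerivAt mf d θ →
      (∀ᶠ θ' in nhds θ, S / σ * stdphi ((θ' - mf θ') / σ) = C * mf θ') →
      d = m * (m - θ) / (m * (m - θ) + σ ^ 2) ∧
      (m > θ → 0 < d ∧ d < 1) ∧
      (m ≤ θ → d ≤ 0) := by
  have hphi := stdphi_pos ((θ - m) / σ)
  have hm : 0 < m := by
    have : 0 < C * m := by
      rw [← hFOC]; positivity
    nlinarith
  refine ⟨hm, ?_⟩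
  intro mf d hmfθ hmf hev
  obtain ⟨z, hzdef⟩ : ∃ z : ℝ, z = (θ - m) / σ := ⟨_, rfl⟩
  rw [← hzdef] at hFOC hphi
  -- derivative of inner function
  have hz : HasDerivAt (fun θ' => (θ' - mf θ') / σ) ((1 - d) / σ) θ :=
    ((hasDerivAt_id θ).sub hmf).div_const σ
  have hcomp : HasDerivAt (fun θ' => stdphi ((θ' - mf θ') / σ))
      (-z * stdphi z * ((1 - d) / σ)) θ := by
    have := (hasDerivAt_stdphi ((θ - mf θ) / σ)).comp θ hz
    simpa [hmfθ, hzdef, Function.comp_def] using this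
  have hg : HasDerivAt (fun θ' => S / σ * stdphi ((θ' - mf θ') / σ) - C * mf θ')
      (S / σ * (-z * stdphi z * ((1 - d) / σ)) - C * d) θ :=
    (hcomp.const_mul (S / σ)).sub (hmf.const_mul C)
  have hev0 : (fun θ' => S / σ * stdphi ((θ' - mf θ') / σ) - C * mf θ')
      =ᶠ[nhds θ] fun _ => (0 : ℝ) := by
    filter_upwards [hev] with θ' h using by rw [h]; ring
  have hg0 : HasDerivAt (fun θ' => S / σ * stdphi ((θ' - mf θ') / σ) - C * mf θ')
      (0 : ℝ) θ := (hasDerivAt_const θ (0 : ℝ)).congr_of_eventuallyEq hev0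
  have heq : S / σ * (-z * stdphi z * ((1 - d) / σ)) - C * d = 0 := hg.unique hg0
  -- substitute FOC : S / σ * stdphi z = C * m
  have hσ' : σ ≠ 0 := ne_of_gt hσ
  have key : m * (m - θ) * (1 - d) = σ ^ 2 * d := by
    have h1 : S / σ * stdphi z = C * m := hFOC
    have hC' : C ≠ 0 := ne_of_gt hC
    have h2 : S * stdphi z = C * m * σ := by
      field_simp at h1; linarith
    field_simp at heq
    have hθm : θ - m = σ * z := by rw [hzdef]; field_simp
    have key' : C * (m * (m - θ) * (1 - d)) = C * (σ ^ 2 * d) := by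
      linear_combination heq + z * (1 - d) * h2 - C * m * (1 - d) * hθm
    exact mul_left_cancel₀ hC' key'
  have hd : d = m * (m - θ) / (m * (m - θ) + σ ^ 2) := by
    field_simp
    nlinarith [key]
  refine ⟨hd, ?_, ?_⟩
  · intro hmθ
    have hnum : 0 < m * (m - θ) := by nlinarith
    constructor
    · rw [hd]; positivity
    · rw [hd, div_lt_one hSOC]; nlinarith [sq_nonneg σ, hσ]
  · intro hmθ
    have hnum : m * (m - θ) ≤ 0 := by nlinarith
    rw [hd]
    exact div_nonpos_of_nonpos_of_nonneg hnum (le_of_lt hSOC)
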